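/- Let φ: Z_{2k} → Z_2^k be a Gray map such that the operation φ(i)·φ(j) = φ(i+j) is Hamming-compatible. Then φ is unique up to coordinate permutation: there exists a permutation μ of the k coordinates such that μ ∘ φ equals the standard map φ_0(i) = (0^{(k−i)} | 1^{(i)}) for 0 ≤ i ≤ k−1, φ_0(i+k) = φ_0(i) + 1^{(k)}. -/

import Mathlib

lemma zmod2cases : ∀ z : ZMod 2, z = 0 ∨ z = 1 := by decide

lemma key_core {k : ℕ} (x : Fin k → ZMod 2) (u v : Fin k) (huv : u ≠ v)
    (h : hammingNorm (fun j => x j + ((if j = u then (1:ZMod 2) else 0) + (if j = v then 1 else 0)))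
        = hammingNorm x) :
    x u ≠ x v := by
  intro hxy
  set x' : Fin k → ZMod 2 :=
    fun j => x j + ((if j = u then (1:ZMod 2) else 0) + (if j = v then 1 else 0)) with hx'
  have hxu : x' u = x u + 1 := by simp [hx', huv]
  have hxv : x' v = x v + 1 := by simp [hx', (Ne.symm huv : v ≠ u)]
  have hother : ∀ j, j ≠ u → j ≠ v → x' j = x j := by
    intro j h1 h2; simp [hx', h1, h2]
  have hn : ∀ y : Fin k → ZMod 2,
      (hammingNorm y : ℤ) = ∑ j : Fin k, (if y j ≠ 0 then (1:ℤ) else 0) := by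
    intro y; rw [hammingNorm, Finset.card_filter]; push_cast; rfl
  have hsum : ∑ j : Fin k,
      ((if x' j ≠ 0 then (1:ℤ) else 0) - (if x j ≠ 0 then 1 else 0)) = 0 := by
    rw [Finset.sum_sub_distrib, ← hn, ← hn, h]; ring
  have hpair : ∑ j ∈ ({u, v} : Finset (Fin k)),
      ((if x' j ≠ 0 then (1:ℤ) else 0) - (if x j ≠ 0 then 1 else 0)) = 0 := by
    rw [Finset.sum_subset (Finset.subset_univ _) ?_]
    · exact hsum
    · intro j _ hj
      simp only [Finset.mem_insert, Finset.mem_singleton] at hj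
      push_neg at hj
      rw [hother j hj.1 hj.2, sub_self]
  rw [Finset.sum_pair huv] at hpair
  have h20 : (1 : ZMod 2) + 1 = 0 := by decide
  have h10 : (0 : ZMod 2) + 1 ≠ 0 := by decide
  rw [hxu, hxv, hxy] at hpair
  rcases zmod2cases (x v) with h0 | h0 <;> rw [h0] at hpair
  · rw [if_pos h10, if_neg (by simp)] at hpair
    norm_num at hpair
  · rw [h20, if_neg (by simp), if_pos (by simp)] at hpair
    norm_num at hpair

/-- The standard Gray map `ZMod (2*k) → ZMod 2 ^ k`:
`φ(i) = 0^(k-i) | 1^(i)` for `0 ≤ i ≤ k-1`, and `φ(i+k) = φ(i) + 1^(k)`. -/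
def gray (k : ℕ) (i : ZMod (2 * k)) : Fin k → ZMod 2 :=
  fun j => if i.val < k then (if k ≤ j.val + i.val then 1 else 0)
           else (if k ≤ j.val + (i.val - k) then 0 else 1)

theorem gray_unique_up_to_permutation (k : ℕ) (hk : 0 < k)
    (φ : ZMod (2 * k) → Fin k → ZMod 2)
    (hinj : Function.Injective φ)
    (hgray : ∀ i : ZMod (2 * k), hammingDist (φ i) (φ (i + 1)) = 1)
    (hHC : ∀ a b : ZMod (2 * k), hammingDist (φ a) (φ (a + b)) = hammingNorm (φ b)) :
    ∃ μ : Equiv.Perm (Fin k),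
      ∀ i : ZMod (2 * k), (fun t => φ i (μ.symm t)) = gray k i := by
  classical
  haveI : NeZero (2 * k) := ⟨by omega⟩
  -- φ 0 = 0
  have hφ0 : φ 0 = 0 := by
    have h := hHC 0 0
    rw [add_zero, hammingDist_self] at h
    exact hammingNorm_eq_zero.mp h.symm
  -- the flip coordinate
  have hflip : ∀ n : ℕ, ∃ u : Fin k,
      ∀ j, φ ((n+1 : ℕ)) j = φ ((n : ℕ)) j + (if j = u then 1 else 0) := by
    intro n
    have h := hgray ((n : ℕ) : ZMod (2*k))
    rw [hammingDist] at h
    obtain ⟨u, hu⟩ := Finset.card_eq_one.mp h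
    refine ⟨u, fun j => ?_⟩
    have hmem : ∀ j' : Fin k,
        (φ ((n:ℕ) : ZMod (2*k)) j' ≠ φ (((n:ℕ) : ZMod (2*k)) + 1) j') ↔ j' = u := by
      intro j'
      constructor
      · intro hne
        have : j' ∈ Finset.filter
            (fun i => φ ((n:ℕ) : ZMod (2*k)) i ≠ φ (((n:ℕ) : ZMod (2*k)) + 1) i)
            Finset.univ := by simp [hne]
        rw [hu] at this
        simpa using this
      · intro hj'
        have : j' ∈ ({u} : Finset (Fin k)) := by simp [hj']
        rw [← hu] at this
        simpa using this
    have hcast : ((n+1 : ℕ) : ZMod (2*k)) = ((n:ℕ) : ZMod (2*k)) + 1 := by push_cast; ring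
    rw [hcast]
    by_cases hj : j = u
    · subst hj
      have hne := (hmem j).mpr rfl
      rw [if_pos rfl]
      have : ∀ a b : ZMod 2, a ≠ b → b = a + 1 := by decide
      exact this _ _ hne
    · have heq : φ ((n:ℕ) : ZMod (2*k)) j = φ (((n:ℕ) : ZMod (2*k)) + 1) j := by
        by_contra hne
        exact hj ((hmem j).mp hne)
      rw [if_neg hj, add_zero, heq]
  choose c hc using hflip
  -- partial sums
  set S : ℕ → Fin k → ZMod 2 :=
    fun n j => ∑ t ∈ Finset.range n, (if j = c t then 1 else 0) with hSdef
  have hSφ : ∀ n : ℕ, φ ((n:ℕ) : ZMod (2*k)) = S n := by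
    intro n
    induction n with
    | zero => funext j; simp [hSdef, hφ0]
    | succ n ih =>
      funext j
      rw [hc n j, ih]
      simp only [hSdef]
      rw [Finset.sum_range_succ]
  -- window sums
  set W : ℕ → ℕ → Fin k → ZMod 2 :=
    fun a b j => ∑ t ∈ Finset.Ico a (a+b), (if j = c t then 1 else 0) with hWdef
  have hwin : ∀ a b (j : Fin k), S (a + b) j = S a j + W a b j := by
    intro a b j
    simp only [hSdef, hWdef]
    rw [Finset.range_eq_Ico, Finset.range_eq_Ico]
    exact (Finset.sum_Ico_consecutive (fun t => if j = c t then (1:ZMod 2) else 0) (Nat.zero_le a) (Nat.le_add_right a b)).symm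
  have hnormW : ∀ a b : ℕ, hammingNorm (W a b) = hammingNorm (φ ((b:ℕ) : ZMod (2*k))) := by
    intro a b
    have h := hHC ((a:ℕ) : ZMod (2*k)) ((b:ℕ) : ZMod (2*k))
    rw [← Nat.cast_add] at h
    rw [hSφ a, hSφ (a+b)] at h
    have hsub : S (a+b) - S a = W a b := by
      funext j
      rw [Pi.sub_apply, hwin a b j, add_sub_cancel_left]
    rw [hammingDist_eq_hammingNorm, neg_add_eq_sub, hsub] at h
    exact h
  -- peel top / bottom of windows
  have hWtop : ∀ a b (j : Fin k),
      W a (b+1) j = W a b j + (if j = c (a+b) then 1 else 0) := by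
    intro a b j
    simp only [hWdef]
    rw [show a + (b+1) = (a+b) + 1 from rfl]
    exact Finset.sum_Ico_succ_top (Nat.le_add_right a b) _
  have hWbot : ∀ a b (j : Fin k),
      W a (b+1) j = (if j = c a then 1 else 0) + W (a+1) b j := by
    intro a b j
    simp only [hWdef]
    rw [show a + 1 + b = a + (b+1) from by omega]
    exact Finset.sum_eq_sum_Ico_succ_bot (by omega) _
  -- the key parity lemma
  have hKEY : ∀ a b : ℕ, c a ≠ c (a + b) → W a b (c a) ≠ W a b (c (a + b)) := by
    intro a b huv
    have h1 : hammingNorm (W a b) = hammingNorm (W (a+1) b) := by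
      rw [hnormW, hnormW]
    have hchar : ∀ z w : ZMod 2, z + w + w = z := by decide
    have h2 : (fun j => W a b j +
        ((if j = c a then (1:ZMod 2) else 0) + (if j = c (a+b) then 1 else 0)))
        = W (a+1) b := by
      funext j
      have e1 := hWbot a b j
      have e2 := hWtop a b j
      have : W (a+1) b j = W a b j + (if j = c (a+b) then 1 else 0) + (if j = c a then 1 else 0) := by
        rw [← e2, e1, add_comm ((if j = c a then (1:ZMod 2) else 0)) (W (a+1) b j), hchar]
      rw [this]
      ring
    apply key_core (W a b) (c a) (c (a+b)) huv
    rw [h2]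
    exact h1.symm
  -- 2k-periodicity of flips
  have hcastper : ∀ n : ℕ, ((n + 2*k : ℕ) : ZMod (2*k)) = ((n : ℕ) : ZMod (2*k)) := by
    intro n; rw [Nat.cast_add, ZMod.natCast_self, add_zero]
  have hper2k : ∀ n : ℕ, c (n + 2*k) = c n := by
    intro n
    by_contra hne
    have key : ∀ j : Fin k,
        (if j = c (n + 2*k) then (1:ZMod 2) else 0) = (if j = c n then 1 else 0) := by
      intro j
      have e1 := hc n j
      have e2 := hc (n + 2*k) j
      rw [hcastper n] at e2
      rw [show ((n + 2*k + 1 : ℕ) : ZMod (2*k)) = ((n + 1 : ℕ) : ZMod (2*k)) from by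
        rw [show n + 2*k + 1 = (n+1) + 2*k from by omega]; exact hcastper (n+1)] at e2
      have := e2.symm.trans e1
      exact add_left_cancel this
    have h1 := key (c (n + 2*k))
    rw [if_pos rfl, if_neg hne] at h1
    exact one_ne_zero h1
  -- minimal repeat distance
  have hex : ∃ m, 0 < m ∧ ∃ a, c (a + m) = c a := ⟨2*k, by omega, 0, hper2k 0⟩
  obtain ⟨hm0, a0, ha0⟩ := Nat.find_spec hex
  set m := Nat.find hex with hmdef
  have hmin : ∀ m', 0 < m' → m' < m → ∀ a, c (a + m') ≠ c a := by
    intro m' h0 hlt a hEq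
    exact Nat.find_min hex hlt ⟨h0, a, hEq⟩
  -- step lemma: propagating a repeat
  have hstep2 : ∀ b, c (b + m) = c b → c (b + m + 1) = c (b + 1) := by
    intro b hb
    by_contra h1
    have huv : c b ≠ c (b + (m+1)) := by
      intro hEq
      rcases Nat.lt_or_ge 1 m with hm2 | hm1
      · exact hmin 1 one_pos hm2 (b + m) (hEq.symm.trans hb.symm)
      · have hm1' : m = 1 := by omega
        rw [hm1'] at h1 hEq hb
        exact h1 (hEq.symm.trans hb.symm)
    have hval_u : W b (m+1) (c b) = 0 := by
      rw [hWtop b m (c b), if_pos hb.symm]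
      have hWm : W b m (c b) = 1 := by
        simp only [hWdef]
        rw [Finset.sum_eq_sum_Ico_succ_bot (by omega : b < b + m), if_pos rfl]
        have hz : ∑ t ∈ Finset.Ico (b+1) (b+m), (if c b = c t then (1:ZMod 2) else 0) = 0 := by
          apply Finset.sum_eq_zero
          intro t ht
          rw [Finset.mem_Ico] at ht
          rw [if_neg]
          intro hEq
          exact hmin (t - b) (by omega) (by omega) b
            (by rw [show b + (t - b) = t from by omega]; exact hEq.symm)
        rw [hz, add_zero]
      rw [hWm]
      decide
    have hval_v : W b (m+1) (c (b + (m+1))) = 0 := by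
      simp only [hWdef]
      apply Finset.sum_eq_zero
      intro t ht
      rw [Finset.mem_Ico] at ht
      rw [if_neg]
      intro hEq
      by_cases hs0 : t = b
      · rw [hs0] at hEq; exact huv hEq.symm
      by_cases hsm : t = b + m
      · rw [hsm] at hEq
        exact huv (hEq.trans hb).symm
      by_cases hs1 : t = b + 1
      · rw [hs1] at hEq
        exact h1 hEq
      · exact hmin (b + m + 1 - t) (by omega) (by omega) t
          (by rw [show t + (b + m + 1 - t) = b + (m+1) from by omega]; exact hEq)
    exact hKEY b (m+1) huv (hval_u.trans hval_v.symm)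
  -- full m-periodicity
  have hper_from : ∀ s, c (a0 + s + m) = c (a0 + s) := by
    intro s
    induction s with
    | zero => simpa using ha0
    | succ s ih =>
      have h := hstep2 (a0 + s) ih
      rw [show a0 + (s+1) + m = a0 + s + m + 1 from by omega,
        show a0 + (s+1) = a0 + s + 1 from rfl]
      exact h
  have hper2kT : ∀ n T, c (n + 2*k*T) = c n := by
    intro n T
    induction T with
    | zero => simp
    | succ T ih =>
      rw [show n + 2*k*(T+1) = (n + 2*k*T) + 2*k from by ring, hper2k, ih]
  have hperm_all : ∀ n, c (n + m) = c n := by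
    intro n
    have hle : a0 ≤ n + 2*k*(a0+1) := by
      have h1 : a0 + 1 ≤ 2*k*(a0+1) := Nat.le_mul_of_pos_left (a0+1) (by omega)
      omega
    have h2 := hper_from (n + 2*k*(a0+1) - a0)
    rw [show a0 + (n + 2*k*(a0+1) - a0) = n + 2*k*(a0+1) from by omega] at h2
    have e1 := hper2kT n (a0+1)
    have e2 := hper2kT (n+m) (a0+1)
    rw [show n + m + 2*k*(a0+1) = n + 2*k*(a0+1) + m from by ring] at e2
    rw [h2, e1] at e2
    exact e2.symm
  -- injectivity on a period
  have hinjm : ∀ a b, a < m → b < m → c a = c b → a = b := by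
    intro a b ha hb hEq
    rcases lt_trichotomy a b with h | h | h
    · exact absurd (by rw [show a + (b - a) = b from by omega]; exact hEq.symm)
        (hmin (b - a) (by omega) (by omega) a)
    · exact h
    · exact absurd (by rw [show b + (a - b) = a from by omega]; exact hEq)
        (hmin (a - b) (by omega) (by omega) b)
  -- m = k
  have hmk : m ≤ k := by
    have h := Finset.card_le_card_of_injOn (s := Finset.range m) (t := Finset.univ)
      c (fun a _ => Finset.mem_univ (c a))
      (fun a ha b hb hEq => hinjm a b (by simpa using ha) (by simpa using hb) hEq)
    simpa using h
  have hS2m : φ (((2*m : ℕ)) : ZMod (2*k)) = φ 0 := by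
    rw [hSφ (2*m), hφ0]
    funext j
    have hzz : ∀ z : ZMod 2, z + z = 0 := by decide
    show S (2*m) j = 0
    rw [show 2*m = m + m from by ring, hwin m m j]
    have hWS : W m m j = S m j := by
      simp only [hWdef, hSdef]
      rw [Finset.sum_Ico_eq_sum_range]
      rw [show m + m - m = m from by omega]
      apply Finset.sum_congr rfl
      intro t ht
      rw [show m + t = t + m from by omega, hperm_all t]
    rw [hWS, hzz]
  have h2k2m : (2*k) ∣ (2*m) := by
    have h := hinj hS2m
    rwa [ZMod.natCast_eq_zero_iff] at h
  have hmk2 : m = k := by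
    have h1 : 2*k ≤ 2*m := Nat.le_of_dvd (by omega) h2k2m
    omega
  -- k-periodicity
  have hperk : ∀ n, c (n + k) = c n := by
    intro n
    have h := hperm_all n
    rwa [hmk2] at h
  -- the permutation
  have hcinj : Function.Injective (fun s : Fin k => c s.val) := by
    intro a b hEq
    have ha := a.isLt
    have hb := b.isLt
    exact Fin.ext (hinjm a.val b.val (by omega) (by omega) hEq)
  have hbij : Function.Bijective (fun s : Fin k => c s.val) :=
    Finite.injective_iff_bijective.mp hcinj
  refine ⟨(Equiv.ofBijective _ hbij).symm.trans Fin.revPerm, ?_⟩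
  intro i
  funext t
  have hμ : ((Equiv.ofBijective _ hbij).symm.trans Fin.revPerm).symm t
      = c ((Fin.rev t).val) := by
    simp [Equiv.symm_trans_apply, Fin.revPerm_symm, Equiv.ofBijective_apply]
  show φ i (((Equiv.ofBijective _ hbij).symm.trans Fin.revPerm).symm t) = gray k i t
  rw [hμ]
  set n := i.val with hn
  have hn2 : n < 2*k := i.val_lt
  set r := (Fin.rev t).val with hr
  have htval := t.isLt
  have hrval : r = k - 1 - t.val := by rw [hr, Fin.val_rev]; omega
  have hrk : r < k := by omega
  have hrt : r + t.val + 1 = k := by omega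
  have hcast : ((n : ℕ) : ZMod (2*k)) = i := ZMod.natCast_rightInverse i
  rw [← hcast, hSφ n]
  have hcount : S n (c r) = (if r < n then (1:ZMod 2) else 0) + (if r + k < n then 1 else 0) := by
    have hpt : ∀ s ∈ Finset.range n, (if c r = c s then (1:ZMod 2) else 0)
        = (if s = r then 1 else 0) + (if s = r + k then 1 else 0) := by
      intro s hs
      rw [Finset.mem_range] at hs
      by_cases h1 : s = r
      · subst h1; rw [if_pos rfl, if_pos rfl, if_neg (by omega), add_zero]
      by_cases h2 : s = r + k
      · subst h2
        rw [if_pos (hperk r).symm, if_neg h1, if_pos rfl, zero_add]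
      · rw [if_neg ?_, if_neg h1, if_neg h2, add_zero]
        intro hEq
        rcases Nat.lt_or_ge s k with hsk | hsk
        · exact h1 (hinjm s r (by omega) (by omega) hEq.symm)
        · have hcs : c s = c (s - k) := by
            rw [← hperk (s - k), show s - k + k = s from by omega]
          rw [hcs] at hEq
          have := hinjm (s - k) r (by omega) (by omega) hEq.symm
          exact h2 (by omega)
    show (∑ s ∈ Finset.range n, if c r = c s then (1:ZMod 2) else 0) = _
    rw [Finset.sum_congr rfl hpt, Finset.sum_add_distrib,
      Finset.sum_ite_eq' (Finset.range n) r (fun _ => (1:ZMod 2)),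
      Finset.sum_ite_eq' (Finset.range n) (r+k) (fun _ => (1:ZMod 2))]
    simp only [Finset.mem_range]
  rw [hcount]
  simp only [gray]
  rw [ZMod.val_cast_of_lt hn2]
  split_ifs <;> first | rfl | omega
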